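/- For all integers n ≥ 1, P(n) ≥ (2 + 2√2)^n, where P(n) is the number of paths from u₁ to u_{n+1} in the graph H_n. -/

import Mathlib

/-- The graph `Hₙ` on vertices `u₀,…,uₙ` (left) and `v₀,…,vₙ` (right), 0-indexed:
`uᵢ ~ uᵢ₊₁`, `vᵢ ~ vᵢ₊₁`, and `uᵢ ~ vⱼ` whenever `|i - j| ≤ 1`. -/
def Hgraph (n : ℕ) : SimpleGraph (Fin (n + 1) ⊕ Fin (n + 1)) :=
  SimpleGraph.fromRel (fun a b =>
    match a, b with
    | .inl i, .inl j => (i : ℕ) + 1 = (j : ℕ)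
    | .inr i, .inr j => (i : ℕ) + 1 = (j : ℕ)
    | .inl i, .inr j => (i : ℕ) ≤ (j : ℕ) + 1 ∧ (j : ℕ) ≤ (i : ℕ) + 1
    | .inr _, .inl _ => False)

/-- `P(n)`: the number of paths in `Hₙ` from `u₁` (i.e. `inl 0`) to `u_{n+1}`
(i.e. `inl (Fin.last n)`). -/
noncomputable def Pnum (n : ℕ) : ℕ :=
  {p : (Hgraph n).Walk (Sum.inl 0) (Sum.inl (Fin.last n)) | p.IsPath}.ncard

namespace Hpf

abbrev V (n : ℕ) := Fin (n + 1) ⊕ Fin (n + 1)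

def vtx (n : ℕ) (s : Bool) (i : ℕ) (h : i ≤ n) : V n :=
  match s with
  | false => .inl ⟨i, by omega⟩
  | true  => .inr ⟨i, by omega⟩

def colOf {n : ℕ} : V n → ℕ := Sum.elim Fin.val Fin.val

@[simp] lemma colOf_vtx (n s i h) : colOf (vtx n s i h) = i := by cases s <;> rfl

lemma vtx_eq_iff {n : ℕ} {s t : Bool} {i j : ℕ} {hi : i ≤ n} {hj : j ≤ n} :
    vtx n s i hi = vtx n t j hj ↔ (s = t ∧ i = j) := by
  cases s <;> cases t <;> simp [vtx, Fin.ext_iff]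

lemma adj_cross {n : ℕ} (s t : Bool) {i : ℕ} (h : i + 1 ≤ n) :
    (Hgraph n).Adj (vtx n s i (by omega)) (vtx n t (i+1) h) := by
  cases s <;> cases t <;>
  · rw [Hgraph, SimpleGraph.fromRel_adj]
    constructor
    · simp [vtx, Fin.ext_iff]
    · simp [vtx] <;> omega

lemma adj_detour {n : ℕ} (s : Bool) {i : ℕ} (h : i ≤ n) :
    (Hgraph n).Adj (vtx n s i h) (vtx n (!s) i h) := by
  cases s <;>
  · rw [Hgraph, SimpleGraph.fromRel_adj]
    constructor
    · simp [vtx]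
    · simp [vtx]

lemma vtx_eq_last {n i : ℕ} {h : i ≤ n} (e : i = n) :
    vtx n false i h = Sum.inl (Fin.last n) := by
  subst e; rfl

inductive Code : ℕ → Type where
  | nil : Code 0
  | last : Code 1
  | s1 (d t : Bool) {m : ℕ} (c : Code m) : Code (m + 1)
  | s2 (t r : Bool) {m : ℕ} (c : Code m) : Code (m + 2)

open SimpleGraph in
def toWalk {n : ℕ} : {m : ℕ} → Code m → (i : ℕ) → (h : i + m = n) → (s : Bool) →
    (Hgraph n).Walk (vtx n s i (by omega)) (Sum.inl (Fin.last n))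
  | 0, .nil, i, h, false => Walk.nil.copy rfl (vtx_eq_last (by omega))
  | 0, .nil, i, h, true  =>
      (Walk.cons (adj_detour true (by omega)) Walk.nil).copy rfl (vtx_eq_last (by omega))
  | 1, .last, i, h, s =>
      (Walk.cons (adj_cross s true (by omega))
        (Walk.cons ((adj_cross (!s) true (by omega)).symm)
          (Walk.cons (adj_cross (!s) false (by omega)) Walk.nil))).copy rfl
        (vtx_eq_last (by omega))
  | _ + 1, .s1 false t c, i, h, s =>
      Walk.cons (adj_cross s t (by omega)) (toWalk c (i+1) (by omega) t)
  | _ + 1, .s1 true t c, i, h, s =>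
      Walk.cons (adj_detour s (by omega))
        (Walk.cons (adj_cross (!s) t (by omega)) (toWalk c (i+1) (by omega) t))
  | _ + 2, .s2 t r c, i, h, s =>
      Walk.cons (adj_cross s t (by omega))
        (Walk.cons ((adj_cross (!s) t (by omega)).symm)
          (Walk.cons (adj_cross (!s) (!t) (by omega))
            (Walk.cons (adj_cross (!t) r (by omega)) (toWalk c (i+2) (by omega) r))))

def suppL {n : ℕ} : {m : ℕ} → Code m → (i : ℕ) → (h : i + m = n) → (s : Bool) → List (V n)
  | 0, .nil, i, h, false => [vtx n false i (by omega)]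
  | 0, .nil, i, h, true  => [vtx n true i (by omega), vtx n false i (by omega)]
  | 1, .last, i, h, s =>
      [vtx n s i (by omega), vtx n true (i+1) (by omega),
       vtx n (!s) i (by omega), vtx n false (i+1) (by omega)]
  | _ + 1, .s1 false t c, i, h, s => vtx n s i (by omega) :: suppL c (i+1) (by omega) t
  | _ + 1, .s1 true t c, i, h, s =>
      vtx n s i (by omega) :: vtx n (!s) i (by omega) :: suppL c (i+1) (by omega) t
  | _ + 2, .s2 t r c, i, h, s =>
      vtx n s i (by omega) :: vtx n t (i+1) (by omega) :: vtx n (!s) i (by omega) ::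
        vtx n (!t) (i+1) (by omega) :: suppL c (i+2) (by omega) r

lemma support_toWalk {n : ℕ} : ∀ {m : ℕ} (c : Code m) (i : ℕ) (h : i + m = n) (s : Bool),
    (toWalk c i h s).support = suppL c i h s := by
  intro m c
  induction c with
  | nil => intro i h s; cases s <;> simp [toWalk, suppL]
  | last => intro i h s; simp [toWalk, suppL]
  | s1 d t c ih => intro i h s; cases d <;> simp [toWalk, suppL, ih]
  | s2 t r c ih => intro i h s; simp [toWalk, suppL, ih]



lemma col_ge {n : ℕ} : ∀ {m : ℕ} (c : Code m) (i : ℕ) (h : i + m = n) (s : Bool),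
    ∀ x ∈ suppL c i h s, i ≤ colOf x := by
  intro m c
  induction c with
  | nil =>
      intro i h s x hx
      cases s <;> simp [suppL] at hx <;> rcases hx with rfl | rfl <;> simp
  | last =>
      intro i h s x hx
      simp [suppL] at hx
      rcases hx with rfl | rfl | rfl | rfl <;> simp
  | s1 d t c ih =>
      intro i h s x hx
      cases d <;> simp [suppL] at hx
      · rcases hx with rfl | hx
        · simp
        · have := ih (i+1) (by omega) t x hx; omega
      · rcases hx with rfl | rfl | hx
        · simp
        · simp
        · have := ih (i+1) (by omega) t x hx; omega
  | s2 t r c ih =>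
      intro i h s x hx
      simp [suppL] at hx
      rcases hx with rfl | rfl | rfl | rfl | hx
      · simp
      · simp
      · simp
      · simp
      · have := ih (i+2) (by omega) r x hx; omega

lemma suppL_nodup {n : ℕ} : ∀ {m : ℕ} (c : Code m) (i : ℕ) (h : i + m = n) (s : Bool),
    (suppL c i h s).Nodup := by
  intro m c
  induction c with
  | nil => intro i h s; cases s <;> simp [suppL, vtx_eq_iff]
  | last =>
      intro i h s
      cases s <;> simp [suppL, vtx_eq_iff] <;> omega
  | s1 d t c ih =>
      intro i h s
      have k : ∀ (s' : Bool) (hs : i ≤ n), vtx n s' i hs ∉ suppL c (i+1) (by omega) t := by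
        intro s' hs hx
        have := col_ge c (i+1) (by omega) t _ hx
        simp only [colOf_vtx] at this
        omega
      cases d <;> simp [suppL, vtx_eq_iff, k, ih (i+1) (by omega) t]
  | s2 t r c ih =>
      intro i h s
      have k : ∀ (s' : Bool) (j : ℕ) (hj : j ≤ n), j ≤ i + 1 →
          vtx n s' j hj ∉ suppL c (i+2) (by omega) r := by
        intro s' j hj hji hx
        have := col_ge c (i+2) (by omega) r _ hx
        simp only [colOf_vtx] at this
        omega
      have k1 := k t (i+1) (by omega) (by omega)
      have k2 := k (!t) (i+1) (by omega) (by omega)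
      have k3 := k s i (by omega) (by omega)
      have k4 := k (!s) i (by omega) (by omega)
      simp [suppL, vtx_eq_iff, k1, k2, k3, k4, ih (i+2) (by omega) r]

lemma suppL_cons {n : ℕ} : ∀ {m : ℕ} (c : Code m) (i : ℕ) (h : i + m = n) (s : Bool),
    suppL c i h s = vtx n s i (by omega) :: (suppL c i h s).tail := by
  intro m c i h s
  cases c with
  | nil => cases s <;> simp [suppL]
  | last => simp [suppL]
  | s1 d t c => cases d <;> simp [suppL]
  | s2 t r c => simp [suppL]


lemma suppL_inj {n : ℕ} : ∀ {m : ℕ} (c c' : Code m) (i : ℕ) (h : i + m = n) (s : Bool),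
    suppL c i h s = suppL c' i h s → c = c' := by
  intro m c
  induction c with
  | nil =>
      intro c' i h s _
      cases c'
      rfl
  | last =>
      intro c' i h s heq
      cases c' with
      | last => rfl
      | s1 d t k =>
          cases k
          exfalso
          cases d <;> cases t <;> simp [suppL, vtx_eq_iff] at heq <;> omega
  | s1 d t k ih =>
      intro c' i h s heq
      cases c' with
      | last =>
          cases k
          exfalso
          cases d <;> cases t <;> simp [suppL, vtx_eq_iff] at heq <;> omega
      | s1 d' t' k' =>
          cases d <;> cases d' <;> simp only [suppL] at heq
          · obtain ⟨-, h2⟩ := List.cons.inj heq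
            have ht : t = t' := by
              have h3 := h2
              rw [suppL_cons k, suppL_cons k'] at h3
              exact (vtx_eq_iff.mp (List.cons.inj h3).1).1
            subst ht
            rw [ih k' (i+1) (by omega) t h2]
          · exfalso
            obtain ⟨-, h2⟩ := List.cons.inj heq
            rw [suppL_cons k] at h2
            have := (vtx_eq_iff.mp (List.cons.inj h2).1).2
            omega
          · exfalso
            obtain ⟨-, h2⟩ := List.cons.inj heq
            rw [suppL_cons k'] at h2
            have := (vtx_eq_iff.mp (List.cons.inj h2).1).2
            omega
          · obtain ⟨-, h2⟩ := List.cons.inj heq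
            obtain ⟨-, h3⟩ := List.cons.inj h2
            have ht : t = t' := by
              have h4 := h3
              rw [suppL_cons k, suppL_cons k'] at h4
              exact (vtx_eq_iff.mp (List.cons.inj h4).1).1
            subst ht
            rw [ih k' (i+1) (by omega) t h3]
      | s2 t' r' k' =>
          exfalso
          cases d <;> simp only [suppL] at heq <;> obtain ⟨-, h2⟩ := List.cons.inj heq
          · have hmem : vtx n (!s) i (by omega) ∈ suppL k (i+1) (by omega) t := by
              rw [h2]
              exact List.mem_cons_of_mem _ List.mem_cons_self
            have := col_ge k (i+1) (by omega) t _ hmem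
            simp only [colOf_vtx] at this
            omega
          · have := (vtx_eq_iff.mp (List.cons.inj h2).1).2
            omega
  | s2 t r k ih =>
      intro c' i h s heq
      cases c' with
      | s1 d' t' k' =>
          exfalso
          cases d' <;> simp only [suppL] at heq <;> obtain ⟨-, h2⟩ := List.cons.inj heq
          · have hmem : vtx n (!s) i (by omega) ∈ suppL k' (i+1) (by omega) t' := by
              rw [← h2]
              exact List.mem_cons_of_mem _ List.mem_cons_self
            have := col_ge k' (i+1) (by omega) t' _ hmem
            simp only [colOf_vtx] at this
            omega
          · have := (vtx_eq_iff.mp (List.cons.inj h2).1).2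
            omega
      | s2 t'' r'' k'' =>
          simp only [suppL] at heq
          obtain ⟨-, h2⟩ := List.cons.inj heq
          obtain ⟨e1, h3⟩ := List.cons.inj h2
          obtain ⟨-, h4⟩ := List.cons.inj h3
          obtain ⟨-, h5⟩ := List.cons.inj h4
          have ht : t = t'' := (vtx_eq_iff.mp e1).1
          subst ht
          have hr : r = r'' := by
            have h6 := h5
            rw [suppL_cons k, suppL_cons k''] at h6
            exact (vtx_eq_iff.mp (List.cons.inj h6).1).1
          subst hr
          rw [ih k'' (i+2) (by omega) r h5]


def Ncount : ℕ → ℕ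
  | 0 => 1
  | 1 => 5
  | (m+2) => 4 * Ncount (m+1) + 4 * Ncount m

def codeEquiv0 : Code 0 ≃ Unit where
  toFun _ := ()
  invFun _ := .nil
  left_inv c := by cases c; rfl
  right_inv _ := rfl

def codeEquiv1 : Code 1 ≃ Unit ⊕ (Bool × Bool) where
  toFun c :=
    match c with
    | .last => .inl ()
    | .s1 d t .nil => .inr (d, t)
  invFun x :=
    match x with
    | .inl _ => .last
    | .inr (d, t) => .s1 d t .nil
  left_inv c := by
    cases c with
    | last => rfl
    | s1 d t k => cases k; rfl
  right_inv x := by rcases x with _ | ⟨d, t⟩ <;> rfl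

def codeEquiv2 (m : ℕ) :
    Code (m + 2) ≃ (Bool × Bool × Code (m + 1)) ⊕ (Bool × Bool × Code m) where
  toFun c :=
    match c with
    | .s1 d t k => .inl (d, t, k)
    | .s2 t r k => .inr (t, r, k)
  invFun x :=
    match x with
    | .inl (d, t, k) => .s1 d t k
    | .inr (t, r, k) => .s2 t r k
  left_inv c := by
    cases c <;> rfl
  right_inv x := by rcases x with ⟨d, t, k⟩ | ⟨t, r, k⟩ <;> rfl

def codeFinite : ∀ m, Finite (Code m)
  | 0 => .of_equiv _ codeEquiv0.symm
  | 1 => .of_equiv _ codeEquiv1.symm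
  | (m+2) =>
      have := codeFinite (m+1)
      have := codeFinite m
      .of_equiv _ (codeEquiv2 m).symm

lemma card_code : ∀ m, Nat.card (Code m) = Ncount m
  | 0 => by
      rw [Nat.card_congr codeEquiv0]
      simp [Ncount]
  | 1 => by
      rw [Nat.card_congr codeEquiv1, Nat.card_eq_fintype_card]
      simp [Ncount]
  | (m+2) => by
      have f1 := codeFinite (m+1)
      have f0 := codeFinite m
      rw [Nat.card_congr (codeEquiv2 m), Nat.card_sum, Nat.card_prod, Nat.card_prod,
        Nat.card_prod, Nat.card_prod, card_code (m+1), card_code m,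
        Nat.card_eq_fintype_card (α := Bool)]
      simp [Ncount]
      omega

lemma Ncount_ge : ∀ m : ℕ, (2 + 2 * Real.sqrt 2) ^ m ≤ (Ncount m : ℝ) := by
  have hs : Real.sqrt 2 * Real.sqrt 2 = 2 := Real.mul_self_sqrt (by norm_num)
  have hs15 : Real.sqrt 2 ≤ 1.5 := by nlinarith [Real.sqrt_nonneg 2]
  have hpos : (0:ℝ) ≤ 2 + 2 * Real.sqrt 2 := by nlinarith [Real.sqrt_nonneg 2]
  intro m
  induction m using Nat.strong_induction_on with
  | _ m ih =>
    match m with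
    | 0 => simp [Ncount]
    | 1 => simp [Ncount]; nlinarith
    | (m+2) =>
        have i1 := ih (m+1) (by omega)
        have i0 := ih m (by omega)
        have key : (2 + 2 * Real.sqrt 2) ^ (m+2)
            = 4 * (2 + 2 * Real.sqrt 2) ^ (m+1) + 4 * (2 + 2 * Real.sqrt 2) ^ m := by
          have e1 : (2 + 2 * Real.sqrt 2) ^ (m+2)
              = (2 + 2 * Real.sqrt 2) ^ m * ((2 + 2 * Real.sqrt 2) * (2 + 2 * Real.sqrt 2)) := by
            ring
          have e2 : (2 + 2 * Real.sqrt 2) * (2 + 2 * Real.sqrt 2)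
              = 4 * (2 + 2 * Real.sqrt 2) + 4 := by nlinarith
          rw [e1, e2]
          ring
        have hN : (Ncount (m+2) : ℝ) = 4 * (Ncount (m+1) : ℝ) + 4 * (Ncount m : ℝ) := by
          show ((4 * Ncount (m+1) + 4 * Ncount m : ℕ) : ℝ) = _
          push_cast
          ring
        rw [key, hN]
        nlinarith [pow_nonneg hpos m, pow_nonneg hpos (m+1)]


lemma isPath_toWalk {n : ℕ} {m : ℕ} (c : Code m) (i : ℕ) (h : i + m = n) (s : Bool) :
    (toWalk c i h s).IsPath := by
  rw [SimpleGraph.Walk.isPath_def, support_toWalk]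
  exact suppL_nodup c i h s

lemma vtx_zero (n : ℕ) : vtx n false 0 (by omega) = Sum.inl 0 := by
  simp [vtx]

end Hpf

/-- For `n ≥ 1`, `P(n) ≥ (2 + 2√2)^n`. -/
theorem Pnum_ge (n : ℕ) (hn : 1 ≤ n) :
    (2 + 2 * Real.sqrt 2) ^ n ≤ (Pnum n : ℝ) := by
  classical
  open Hpf in
  haveI : DecidableRel (Hgraph n).Adj := Classical.decRel _
  haveI hFin : Finite {p : (Hgraph n).Walk (Sum.inl 0) (Sum.inl (Fin.last n)) // p.IsPath} := by
    refine Finite.of_injective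
      (fun p => (⟨p.1, p.2, p.2.length_lt⟩ :
        {p : (Hgraph n).Walk (Sum.inl 0) (Sum.inl (Fin.last n)) //
          p.IsPath ∧ p.length < Fintype.card (Hpf.V n)})) ?_
    intro p q hpq
    exact Subtype.ext (by simpa using hpq)
  haveI := Hpf.codeFinite n
  set f : Hpf.Code n → {p : (Hgraph n).Walk (Sum.inl 0) (Sum.inl (Fin.last n)) // p.IsPath} :=
    fun c => ⟨(Hpf.toWalk c 0 (by omega) false).copy (Hpf.vtx_zero n) rfl, by
      rw [SimpleGraph.Walk.isPath_copy]
      exact Hpf.isPath_toWalk c 0 (by omega) false⟩ with hf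
  have hinj : Function.Injective f := by
    intro c c' hcc
    apply Hpf.suppL_inj (n := n) c c' 0 (by omega) false
    have h2 := congrArg (fun p => (Subtype.val p).support) hcc
    simpa [hf, SimpleGraph.Walk.support_copy, Hpf.support_toWalk] using h2
  have hcard : Hpf.Ncount n ≤ Pnum n := by
    have h1 := Nat.card_le_card_of_injective f hinj
    rw [Hpf.card_code n] at h1
    have h2 : Nat.card {p : (Hgraph n).Walk (Sum.inl 0) (Sum.inl (Fin.last n)) // p.IsPath}
        = Pnum n := by
      rw [Pnum, ← Nat.card_coe_set_eq]
      exact Nat.card_congr (Equiv.subtypeEquivRight (fun _ => Iff.rfl))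
    rw [← h2]
    exact h1
  calc (2 + 2 * Real.sqrt 2) ^ n ≤ (Hpf.Ncount n : ℝ) := Hpf.Ncount_ge n
    _ ≤ (Pnum n : ℝ) := by exact_mod_cast hcard
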